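/- arXiv:1910.11733 — 3 statements merged into one kernel-verified Lean document; each statement's English description precedes it below -/
import Mathlib

section
/- Let Γ be an infinite graph and F a finite optimal subset of its vertices (i.e. |∂F|/|F| = Λ(|F|), where Λ is the isoperimetric profile). Then twice the Cheeger constant of the subgraph induced on F is at least Λ(|F|/2) − Λ(|F|), i.e. 2·h(F) ≥ Λ(⌊|F|/2⌋) − Λ(|F|). -/
open Set Filter

namespace SepProfile

variable {V : Type*}

/-- Edge boundary of a vertex set: pairs (a,b) with a ∈ A, b ∉ A, a ~ b. -/
def ebd (G : SimpleGraph V) (A : Set V) : Set (V × V) :=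
  {p | G.Adj p.1 p.2 ∧ p.1 ∈ A ∧ p.2 ∉ A}

/-- Isoperimetric ratio |∂A|/|A|. -/
noncomputable def ratio (G : SimpleGraph V) (A : Set V) : ℝ :=
  ((ebd G A).ncard : ℝ) / (A.ncard : ℝ)

/-- Isoperimetric profile Λ(n). -/
noncomputable def isop (G : SimpleGraph V) (n : ℕ) : ℝ :=
  sInf {x | ∃ A : Set V, A.Finite ∧ A.Nonempty ∧ A.ncard ≤ n ∧ x = ratio G A}

/-- Boundary of A within F (edges of the induced subgraph on F leaving A). -/
def inbd (G : SimpleGraph V) (F A : Set V) : Set (V × V) :=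
  {p | G.Adj p.1 p.2 ∧ p.1 ∈ A ∧ p.2 ∈ F \ A}

/-- Cheeger constant of the subgraph induced on F. -/
noncomputable def cheeger (G : SimpleGraph V) (F : Set V) : ℝ :=
  sInf {x | ∃ A : Set V, A ⊆ F ∧ A.Nonempty ∧ 2 * A.ncard ≤ F.ncard ∧
    x = ((inbd G F A).ncard : ℝ) / (A.ncard : ℝ)}

/-- Separation profile Sep(n) = sup_{|F| ≤ n} |F|·h(F). -/
noncomputable def sep (G : SimpleGraph V) (n : ℕ) : ℝ :=
  sSup {x | ∃ F : Set V, F.Finite ∧ F.ncard ≤ n ∧ x = (F.ncard : ℝ) * cheeger G F}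

/-- A finite set is optimal if it realizes the isoperimetric profile. -/
def Optimal (G : SimpleGraph V) (F : Set V) : Prop :=
  F.Finite ∧ F.Nonempty ∧ ratio G F = isop G F.ncard

/-- An integer is optimal if some optimal set has that cardinality. -/
def OptimalInt (G : SimpleGraph V) (n : ℕ) : Prop :=
  ∃ F : Set V, Optimal G F ∧ F.ncard = n

/-- Ball of radius n around v for the graph metric. -/
def ball (G : SimpleGraph V) (v : V) (n : ℕ) : Set V :=
  {u | G.Reachable v u ∧ G.dist v u ≤ n}

/-- All degrees bounded by D. -/
def DegLE (G : SimpleGraph V) (D : ℕ) : Prop :=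
  ∀ v, (G.neighborSet v).ncard ≤ D

/-- Amenability: the isoperimetric profile tends to 0. -/
def Amenable (G : SimpleGraph V) : Prop :=
  Tendsto (fun n => isop G n) atTop (nhds 0)

/-- F together with its outer vertex neighbourhood. -/
def nbh (G : SimpleGraph V) (F : Set V) : Set V :=
  F ∪ {b | ∃ a ∈ F, G.Adj a b}

/-- Partial self-isomorphisms: every finite F has a disjoint isomorphic copy
(together with its boundary neighbourhood). -/
def HasPSI (G : SimpleGraph V) : Prop :=
  ∀ F : Set V, F.Finite →
    ∃ F' : Set V, F'.Finite ∧ Disjoint F F' ∧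
      ∃ e : G.induce (nbh G F) ≃g G.induce (nbh G F'),
        ∀ x : nbh G F, (x : V) ∈ F ↔ ((e x : V) ∈ F')

/-- δ-geometric decay function p_f^δ(x) = inf {y > 0 : f(y) ≤ δ·f(x)}. -/
noncomputable def gdecay (f : ℝ → ℝ) (δ x : ℝ) : ℝ :=
  sInf {y | 0 < y ∧ f y ≤ δ * f x}

end SepProfile

open SepProfile Real

section Aux
open SepProfile

variable {V : Type*}

lemma ratio_nonneg (G : SimpleGraph V) (A : Set V) : 0 ≤ ratio G A := by
  unfold ratio; positivity

lemma isop_nonneg (G : SimpleGraph V) (n : ℕ) : 0 ≤ isop G n := by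
  refine Real.sInf_nonneg ?_
  rintro x ⟨A, -, -, -, rfl⟩
  exact ratio_nonneg G A

lemma isop_le {G : SimpleGraph V} {A : Set V} {n : ℕ} (hfin : A.Finite) (hne : A.Nonempty)
    (hcard : A.ncard ≤ n) : isop G n ≤ ratio G A := by
  refine csInf_le ⟨0, ?_⟩ ⟨A, hfin, hne, hcard, rfl⟩
  rintro x ⟨B, -, -, -, rfl⟩
  exact ratio_nonneg G B

lemma isop_zero (G : SimpleGraph V) : isop G 0 = 0 := by
  unfold isop
  convert Real.sInf_empty
  ext x
  simp only [Set.mem_setOf_eq, Set.mem_empty_iff_false, iff_false, not_exists]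
  rintro A ⟨hfin, hne, hcard, -⟩
  have := (Set.ncard_pos hfin).mpr hne
  omega

lemma cheeger_nonneg (G : SimpleGraph V) (F : Set V) : 0 ≤ cheeger G F := by
  refine Real.sInf_nonneg ?_
  rintro x ⟨A, -, -, -, rfl⟩
  positivity

lemma key_identity (G : SimpleGraph V) {F A : Set V} (hF : F.Finite)
    (hbd : (ebd G F).Finite) (hA : A ⊆ F) :
    (ebd G A).ncard + (ebd G (F \ A)).ncard
      = (ebd G F).ncard + 2 * (inbd G F A).ncard := by
  set eA : Set (V × V) := {p | G.Adj p.1 p.2 ∧ p.1 ∈ A ∧ p.2 ∉ F} with heA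
  set eB : Set (V × V) := {p | G.Adj p.1 p.2 ∧ p.1 ∈ F \ A ∧ p.2 ∉ F} with heB
  have hfinI : (inbd G F A).Finite := by
    refine (hF.prod hF).subset ?_
    rintro ⟨a, b⟩ ⟨-, h2, h3⟩
    exact ⟨hA h2, h3.1⟩
  have hfinI' : (inbd G F (F \ A)).Finite := by
    refine (hF.prod hF).subset ?_
    rintro ⟨a, b⟩ ⟨-, h2, h3⟩
    exact ⟨h2.1, h3.1⟩
  have hfinA : eA.Finite := by
    refine hbd.subset ?_
    rintro ⟨a, b⟩ ⟨h1, h2, h3⟩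
    exact ⟨h1, hA h2, h3⟩
  have hfinB : eB.Finite := by
    refine hbd.subset ?_
    rintro ⟨a, b⟩ ⟨h1, h2, h3⟩
    exact ⟨h1, h2.1, h3⟩
  have e1 : ebd G A = inbd G F A ∪ eA := by
    ext ⟨a, b⟩
    simp only [ebd, inbd, heA, Set.mem_setOf_eq, Set.mem_union, Set.mem_diff]
    have hb : b ∈ A → b ∈ F := fun h => hA h
    tauto
  have e2 : ebd G (F \ A) = inbd G F (F \ A) ∪ eB := by
    ext ⟨a, b⟩
    simp only [ebd, inbd, heB, Set.mem_setOf_eq, Set.mem_union, Set.mem_diff]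
    tauto
  have e3 : ebd G F = eA ∪ eB := by
    ext ⟨a, b⟩
    simp only [ebd, heA, heB, Set.mem_setOf_eq, Set.mem_union, Set.mem_diff]
    have ha : a ∈ A → a ∈ F := fun h => hA h
    tauto
  have eswap : inbd G F (F \ A) = Prod.swap '' (inbd G F A) := by
    rw [Set.image_swap_eq_preimage_swap]
    ext ⟨a, b⟩
    simp only [inbd, Set.mem_setOf_eq, Set.mem_preimage, Prod.swap_prod_mk, Set.mem_diff]
    constructor
    · rintro ⟨h1, h2, h3⟩
      have hbA : b ∈ A := by
        by_contra hc
        exact h3.2 ⟨h3.1, hc⟩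
      exact ⟨h1.symm, hbA, h2⟩
    · rintro ⟨h1, h2, h3⟩
      exact ⟨h1.symm, h3, ⟨hA h2, fun hc => hc.2 h2⟩⟩
  have d1 : Disjoint (inbd G F A) eA := by
    rw [Set.disjoint_left]
    rintro ⟨a, b⟩ ⟨-, -, h3⟩ ⟨-, -, h3'⟩
    exact h3' h3.1
  have d2 : Disjoint (inbd G F (F \ A)) eB := by
    rw [Set.disjoint_left]
    rintro ⟨a, b⟩ ⟨-, -, h3⟩ ⟨-, -, h3'⟩
    exact h3' h3.1
  have d3 : Disjoint eA eB := by
    rw [Set.disjoint_left]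
    rintro ⟨a, b⟩ ⟨-, h2, -⟩ ⟨-, h2', -⟩
    exact h2'.2 h2
  have c1 : (ebd G A).ncard = (inbd G F A).ncard + eA.ncard := by
    rw [e1, Set.ncard_union_eq d1 hfinI hfinA]
  have c2 : (ebd G (F \ A)).ncard = (inbd G F (F \ A)).ncard + eB.ncard := by
    rw [e2, Set.ncard_union_eq d2 hfinI' hfinB]
  have c3 : (ebd G F).ncard = eA.ncard + eB.ncard := by
    rw [e3, Set.ncard_union_eq d3 hfinA hfinB]
  have c4 : (inbd G F (F \ A)).ncard = (inbd G F A).ncard := by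
    rw [eswap, Set.ncard_image_of_injective _ Prod.swap_injective]
  omega

lemma core_ineq (G : SimpleGraph V) {F A : Set V} (hFfin : F.Finite) (hFne : F.Nonempty)
    (hopt : ratio G F = isop G F.ncard) (hbd : (ebd G F).Finite)
    (hA : A ⊆ F) (hAne : A.Nonempty) (hAcard : 2 * A.ncard ≤ F.ncard) :
    isop G (F.ncard / 2) - isop G F.ncard
      ≤ 2 * (((inbd G F A).ncard : ℝ) / (A.ncard : ℝ)) := by
  have hAfin : A.Finite := hFfin.subset hA
  have hA0 : 0 < A.ncard := (Set.ncard_pos hAfin).mpr hAne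
  have hF0 : 0 < F.ncard := (Set.ncard_pos hFfin).mpr hFne
  have hBne : (F \ A).Nonempty := by
    rw [Set.nonempty_iff_ne_empty]
    intro hc
    have hsub : F ⊆ A := fun x hx => by
      by_contra hxa
      have hmem : x ∈ F \ A := ⟨hx, hxa⟩
      rw [hc] at hmem
      exact hmem
    have heq : A = F := Set.Subset.antisymm hA hsub
    rw [heq] at hAcard
    omega
  have hcardsum : (F \ A).ncard + A.ncard = F.ncard :=
    Set.ncard_diff_add_ncard_of_subset hA hFfin
  have hB0 : 0 < (F \ A).ncard := (Set.ncard_pos (show (F \ A).Finite from hFfin.diff)).mpr hBne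
  have hAhalf : A.ncard ≤ F.ncard / 2 := (Nat.le_div_iff_mul_le two_pos).mpr (by omega)
  -- bounds from the isoperimetric profile
  have h1 : isop G (F.ncard / 2) ≤ ratio G A := isop_le hAfin hAne hAhalf
  have h2 : isop G F.ncard ≤ ratio G (F \ A) :=
    isop_le (show (F \ A).Finite from hFfin.diff) hBne (by omega)
  have hid := key_identity G hFfin hbd hA
  -- pass to reals
  set a : ℝ := (A.ncard : ℝ) with ha
  set b : ℝ := ((F \ A).ncard : ℝ) with hb
  have hapos : (0 : ℝ) < a := by rw [ha]; exact_mod_cast hA0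
  have hbpos : (0 : ℝ) < b := by rw [hb]; exact_mod_cast hB0
  have hfpos : (0 : ℝ) < (F.ncard : ℝ) := by exact_mod_cast hF0
  have hsum : b + a = (F.ncard : ℝ) := by rw [ha, hb]; exact_mod_cast hcardsum
  have h1' : isop G (F.ncard / 2) * a ≤ ((ebd G A).ncard : ℝ) := by
    rw [ratio] at h1
    calc isop G (F.ncard / 2) * a ≤ (((ebd G A).ncard : ℝ) / a) * a := by
          exact mul_le_mul_of_nonneg_right h1 hapos.le
      _ = ((ebd G A).ncard : ℝ) := div_mul_cancel₀ _ hapos.ne'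
  have h2' : isop G F.ncard * b ≤ ((ebd G (F \ A)).ncard : ℝ) := by
    rw [ratio] at h2
    calc isop G F.ncard * b ≤ (((ebd G (F \ A)).ncard : ℝ) / b) * b := by
          exact mul_le_mul_of_nonneg_right h2 hbpos.le
      _ = ((ebd G (F \ A)).ncard : ℝ) := div_mul_cancel₀ _ hbpos.ne'
  have hFeq : ((ebd G F).ncard : ℝ) = isop G F.ncard * (b + a) := by
    rw [hsum, ← hopt, ratio, div_mul_cancel₀ _ hfpos.ne']
  have hid' : ((ebd G A).ncard : ℝ) + ((ebd G (F \ A)).ncard : ℝ)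
      = ((ebd G F).ncard : ℝ) + 2 * ((inbd G F A).ncard : ℝ) := by
    exact_mod_cast hid
  rw [show (2:ℝ) * (((inbd G F A).ncard : ℝ) / a)
      = (2 * ((inbd G F A).ncard : ℝ)) / a by ring, le_div_iff₀ hapos]
  nlinarith [h1', h2', hFeq, hid']

end Aux

/-- for an optimal finite set F in an infinite graph,
2·h(F) ≥ Λ(⌊|F|/2⌋) − Λ(|F|). -/
theorem stmt0 {V : Type*} [Infinite V] (G : SimpleGraph V) (F : Set V)
    (hF : Optimal G F) :
    isop G (F.ncard / 2) - isop G F.ncard ≤ 2 * cheeger G F := by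
  obtain ⟨hFfin, hFne, hFopt⟩ := hF
  have hF0 : 0 < F.ncard := (Set.ncard_pos hFfin).mpr hFne
  have hch : 0 ≤ cheeger G F := cheeger_nonneg G F
  have hisF : 0 ≤ isop G F.ncard := isop_nonneg G F.ncard
  by_cases hbd : (ebd G F).Finite
  · by_cases h2 : 2 ≤ F.ncard
    · -- the cheeger set is nonempty
      obtain ⟨a, haF⟩ := id hFne
      have hmem : (((inbd G F {a}).ncard : ℝ) / (({a} : Set V).ncard : ℝ)) ∈
          {x | ∃ A : Set V, A ⊆ F ∧ A.Nonempty ∧ 2 * A.ncard ≤ F.ncard ∧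
            x = ((inbd G F A).ncard : ℝ) / (A.ncard : ℝ)} :=
        ⟨{a}, Set.singleton_subset_iff.mpr haF, Set.singleton_nonempty a,
          by rw [Set.ncard_singleton]; omega, rfl⟩
      have hle : (isop G (F.ncard / 2) - isop G F.ncard) / 2 ≤ cheeger G F := by
        refine le_csInf ⟨_, hmem⟩ ?_
        rintro x ⟨A, hA, hAne, hAcard, rfl⟩
        have := core_ineq G hFfin hFne hFopt hbd hA hAne hAcard
        linarith
      linarith
    · have h1 : F.ncard = 1 := by omega
      rw [h1] at hisF ⊢
      norm_num
      rw [isop_zero]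
      linarith
  · -- infinite boundary: some vertex of F has infinite boundary, so Λ vanishes
    replace hbd : (ebd G F).Infinite := hbd
    have : ∃ a ∈ F, (ebd G {a}).Infinite := by
      by_contra hc
      push_neg at hc
      have hsub : ebd G F ⊆ ⋃ a ∈ F, ebd G {a} := by
        rintro ⟨a, b⟩ ⟨h1, h2, h3⟩
        exact Set.mem_biUnion h2 ⟨h1, rfl, fun hb => h3 (hb ▸ h2)⟩
      exact hbd ((hFfin.biUnion fun a ha => hc a ha).subset hsub)
    obtain ⟨a, haF, hainf⟩ := this
    have hratio : ratio G ({a} : Set V) = 0 := by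
      rw [ratio, hainf.ncard]
      simp
    have hz : isop G (F.ncard / 2) = 0 := by
      rcases Nat.eq_zero_or_pos (F.ncard / 2) with h | h
      · rw [h, isop_zero]
      · refine le_antisymm ?_ (isop_nonneg G _)
        calc isop G (F.ncard / 2) ≤ ratio G ({a} : Set V) :=
              isop_le (Set.finite_singleton a) (Set.singleton_nonempty a)
                (by rw [Set.ncard_singleton]; omega)
          _ = 0 := hratio
    rw [hz]
    linarith
end

section
/- Let G be a connected infinite graph of bounded degree D, let v be a vertex, and suppose there are d₁ > 1, g > 0 and an integer n_ω such that every finite vertex set A (in particular every ball B(v,r) with r ≥ n_ω) satisfies |∂A| ≥ g·|A|^{1−1/d₁}. Then there is a constant b' > 0 (depending only on d₁ and D) such that for every n ≥ n_ω, |B(v,n)| ≥ b'·g^{d₁}·(n − n_ω)^{d₁}. -/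
open Set Filter

open SepProfile Real

section Aux

variable {V : Type*} {G : SimpleGraph V} {v : V}

private lemma mem_ball_self (n : ℕ) : v ∈ ball G v n :=
  ⟨SimpleGraph.Reachable.refl v, by simp [SimpleGraph.dist_self]⟩

private lemma ball_zero : ball G v 0 = {v} := by
  ext u
  simp only [ball, Set.mem_setOf_eq, Nat.le_zero, Set.mem_singleton_iff]
  constructor
  · rintro ⟨hr, hd⟩
    exact (hr.dist_eq_zero_iff.mp hd).symm
  · rintro rfl
    exact ⟨SimpleGraph.Reachable.refl _, SimpleGraph.dist_self⟩

private lemma ball_mono {m n : ℕ} (h : m ≤ n) : ball G v m ⊆ ball G v n :=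
  fun _ hu => ⟨hu.1, hu.2.trans h⟩

private lemma ball_succ_subset (n : ℕ) :
    ball G v (n+1) ⊆ ball G v n ∪ Prod.snd '' ebd G (ball G v n) := by
  rintro u ⟨hr, hd⟩
  by_cases h : G.dist v u ≤ n
  · exact Or.inl ⟨hr, h⟩
  · right
    have hvu : v ≠ u := by rintro rfl; simp [SimpleGraph.dist_self] at h
    obtain ⟨p, hp⟩ := hr.exists_walk_length_eq_dist
    obtain ⟨w, hadj, q, hq⟩ := SimpleGraph.Walk.exists_eq_cons_of_ne hvu.symm p.reverse
    have hql : q.length + 1 = p.length := by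
      have := congrArg SimpleGraph.Walk.length hq
      simpa [SimpleGraph.Walk.length_reverse, add_comm] using this.symm
    have hqn : q.length ≤ n := by omega
    have hw : w ∈ ball G v n :=
      ⟨⟨q.reverse⟩, le_trans (SimpleGraph.dist_le q.reverse)
        (by simpa [SimpleGraph.Walk.length_reverse] using hqn)⟩
    have hun : u ∉ ball G v n := fun hu => h hu.2
    exact ⟨(w, u), ⟨hadj.symm, hw, hun⟩, rfl⟩

private lemma image_ebd_subset (hconn : G.Connected) (n : ℕ) :
    Prod.snd '' ebd G (ball G v n) ⊆ ball G v (n+1) := by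
  rintro b ⟨⟨a, b⟩, ⟨hadj, ⟨hra, hda⟩, -⟩, rfl⟩
  refine ⟨hconn.preconnected v b, ?_⟩
  calc G.dist v b ≤ G.dist v a + G.dist a b := hconn.dist_triangle
    _ ≤ n + 1 := add_le_add hda (le_of_eq (SimpleGraph.dist_eq_one_iff_adj.mpr hadj))

private lemma neighborSet_subset_ball (hconn : G.Connected) {b : V} {m : ℕ}
    (hb : b ∈ ball G v m) : G.neighborSet b ⊆ ball G v (m+1) := by
  intro a ha
  refine ⟨hconn.preconnected v a, ?_⟩
  calc G.dist v a ≤ G.dist v b + G.dist b a := hconn.dist_triangle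
    _ ≤ m + 1 := add_le_add hb.2 (le_of_eq (SimpleGraph.dist_eq_one_iff_adj.mpr ha))

private lemma ncard_le_mul_snd {α β : Type*} {S : Set (α × β)} (hS : S.Finite) {D : ℕ}
    (h : ∀ b, {a | (a, b) ∈ S}.ncard ≤ D) : S.ncard ≤ D * (Prod.snd '' S).ncard := by
  classical
  have hs : S.ncard = hS.toFinset.card := by
    rw [← Set.ncard_coe_finset, hS.coe_toFinset]
  have himg : (Prod.snd '' S).ncard = (hS.toFinset.image Prod.snd).card := by
    rw [← Set.ncard_coe_finset, Finset.coe_image, hS.coe_toFinset]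
  rw [hs, himg]
  apply Finset.card_le_mul_card_image
  intro b _
  have hfib : ((fun a => (a, b)) ⁻¹' S).Finite :=
    hS.preimage (fun x _ y _ hxy => congrArg Prod.fst hxy)
  have hsub : ((hS.toFinset.filter fun p => p.2 = b) : Set (α × β)) ⊆
      (fun a => (a, b)) '' {a | (a, b) ∈ S} := by
    intro p hp
    simp only [Finset.coe_filter, Set.mem_setOf_eq, hS.mem_toFinset] at hp
    exact ⟨p.1, by simpa [← hp.2] using hp.1, by simp [← hp.2]⟩
  calc (hS.toFinset.filter fun p => p.2 = b).card
      = ((hS.toFinset.filter fun p => p.2 = b) : Set (α × β)).ncard :=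
        (Set.ncard_coe_finset _).symm
    _ ≤ ((fun a => (a, b)) '' {a | (a, b) ∈ S}).ncard :=
        Set.ncard_le_ncard hsub (hfib.image _)
    _ = {a | (a, b) ∈ S}.ncard :=
        Set.ncard_image_of_injective _ (fun x y hxy => congrArg Prod.fst hxy)
    _ ≤ D := h b

private lemma key_ineq {d₁ c ε : ℝ} (hd₁ : 1 < d₁) (hc : 0 < c)
    (hε_def : ε = (1 + c) ^ (1/d₁) - 1) {t : ℝ} (ht : 1 ≤ t) :
    (t + ε) ^ d₁ ≤ t ^ d₁ + c * t ^ (d₁ - 1) := by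
  have hd0 : (0:ℝ) < d₁ := lt_trans one_pos hd₁
  have hε0 : 0 ≤ ε := by
    have h2 : (1:ℝ) ^ (1/d₁) ≤ (1 + c) ^ (1/d₁) :=
      Real.rpow_le_rpow zero_le_one (by linarith) (by positivity)
    rw [Real.one_rpow] at h2
    rw [hε_def]; linarith
  have ht0 : (0:ℝ) < t := lt_of_lt_of_le one_pos ht
  have hεd : (1 + ε) ^ d₁ = 1 + c := by
    have h1 : (1:ℝ) + ε = (1 + c) ^ (1/d₁) := by rw [hε_def]; ring
    rw [h1, ← Real.rpow_mul (by linarith), one_div_mul_cancel hd0.ne', Real.rpow_one]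
  set x : ℝ := 1 / t with hx_def
  have hx0 : 0 ≤ x := by positivity
  have hx1 : x ≤ 1 := by rw [hx_def]; exact div_le_one_of_le₀ ht (by linarith)
  have hconv := (convexOn_rpow (le_of_lt hd₁)).2 (Set.mem_Ici.mpr zero_le_one)
      (Set.mem_Ici.mpr (by linarith : (0:ℝ) ≤ 1 + ε)) (by linarith : (0:ℝ) ≤ 1 - x) hx0
      (by ring)
  have hkey : (1 + ε * x) ^ d₁ ≤ 1 + c * x := by
    have h1 : (1 - x) • (1:ℝ) + x • (1 + ε) = 1 + ε * x := by
      simp [smul_eq_mul]; ring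
    have h2 : (1 - x) • ((1:ℝ) ^ d₁) + x • ((1 + ε) ^ d₁) = 1 + c * x := by
      rw [Real.one_rpow, hεd]; simp [smul_eq_mul]; ring
    rw [h1, h2] at hconv
    exact hconv
  have hsplit : t + ε = t * (1 + ε * x) := by
    rw [hx_def, mul_add, mul_one, ← mul_assoc, mul_comm t ε, mul_assoc,
      mul_one_div_cancel ht0.ne', mul_one]
  calc (t + ε) ^ d₁ = t ^ d₁ * (1 + ε * x) ^ d₁ := by
        rw [hsplit, Real.mul_rpow (le_of_lt ht0) (by positivity)]
    _ ≤ t ^ d₁ * (1 + c * x) := by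
        apply mul_le_mul_of_nonneg_left hkey (by positivity)
    _ = t ^ d₁ + c * (t ^ d₁ / t) := by rw [hx_def]; ring
    _ = t ^ d₁ + c * t ^ (d₁ - 1) := by
        rw [Real.rpow_sub ht0, Real.rpow_one]

end Aux


theorem stmt5 {V : Type*} [Infinite V] (G : SimpleGraph V) (hconn : G.Connected)
    (D : ℕ) (hdeg : DegLE G D) (v : V) (d₁ g : ℝ) (hd₁ : 1 < d₁) (hg : 0 < g)
    (nω : ℕ)
    (hiso : ∀ A : Set V, A.Finite → A.Nonempty →
      g * ((A.ncard : ℝ)) ^ (1 - 1/d₁) ≤ ((ebd G A).ncard : ℝ)) :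
    ∃ b' > (0:ℝ), ∀ n : ℕ, nω ≤ n →
      b' * g ^ d₁ * ((n : ℝ) - (nω : ℝ)) ^ d₁ ≤ ((ball G v n).ncard : ℝ) := by
  classical
  have hEbd : ∀ A : Set V, A.Finite → A.Nonempty →
      (ebd G A).Finite ∧ (0:ℝ) < ((ebd G A).ncard : ℝ) := by
    intro A hA hne
    have hA0 : (0:ℝ) < (A.ncard : ℝ) := by
      exact_mod_cast (Set.ncard_pos hA).mpr hne
    have h1 : (0:ℝ) < g * (A.ncard : ℝ) ^ (1 - 1/d₁) :=
      mul_pos hg (Real.rpow_pos_of_pos hA0 _)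
    have h2 : (0:ℝ) < ((ebd G A).ncard : ℝ) := lt_of_lt_of_le h1 (hiso A hA hne)
    have h3 : (ebd G A).ncard ≠ 0 := by exact_mod_cast h2.ne'
    exact ⟨Set.finite_of_ncard_ne_zero h3, h2⟩
  have hfin : ∀ n, (ball G v n).Finite := by
    intro n
    induction n with
    | zero => rw [ball_zero]; exact Set.finite_singleton v
    | succ n ih =>
      have hne : (ball G v n).Nonempty := ⟨v, mem_ball_self n⟩
      exact ((ih.union (((hEbd _ ih hne).1).image _)).subset (ball_succ_subset n))
  have hD1 : 1 ≤ D := by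
    obtain ⟨u, hu⟩ := exists_ne v
    obtain ⟨p⟩ := hconn.preconnected v u
    obtain ⟨w, hadj, -, -⟩ := SimpleGraph.Walk.exists_eq_cons_of_ne (Ne.symm hu) p
    have hsub : G.neighborSet v ⊆ ball G v 1 :=
      neighborSet_subset_ball hconn (mem_ball_self 0)
    have hfinN : (G.neighborSet v).Finite := (hfin 1).subset hsub
    have hpos : 0 < (G.neighborSet v).ncard := (Set.ncard_pos hfinN).mpr ⟨w, hadj⟩
    exact le_trans hpos (hdeg v)
  have hD0 : (0:ℝ) < (D:ℝ) := by
    have : (0:ℕ) < D := hD1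
    exact_mod_cast this
  set c : ℝ := g / D with hc_def
  have hc : 0 < c := div_pos hg hD0
  set a : ℕ → ℝ := fun n => ((ball G v n).ncard : ℝ) with ha_def
  have ha1 : ∀ n, 1 ≤ a n := by
    intro n
    have : 0 < (ball G v n).ncard := (Set.ncard_pos (hfin n)).mpr ⟨v, mem_ball_self n⟩
    show (1:ℝ) ≤ ((ball G v n).ncard : ℝ)
    exact_mod_cast this
  have hstep : ∀ n, a n + c * a n ^ (1 - 1/d₁) ≤ a (n+1) := by
    intro n
    have hBf := hfin n
    have hBne : (ball G v n).Nonempty := ⟨v, mem_ball_self n⟩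
    obtain ⟨hEf, hEpos⟩ := hEbd _ hBf hBne
    have hfib : ∀ b, {x | (x, b) ∈ ebd G (ball G v n)}.ncard ≤ D := by
      intro b
      rcases Set.eq_empty_or_nonempty {x | (x, b) ∈ ebd G (ball G v n)} with he | ⟨a0, ha0⟩
      · simp [he]
      · have hb : b ∈ ball G v (n+1) := image_ebd_subset hconn n ⟨(a0, b), ha0, rfl⟩
        have hnbf : (G.neighborSet b).Finite :=
          (hfin (n+2)).subset (neighborSet_subset_ball hconn hb)
        have hsub : {x | (x, b) ∈ ebd G (ball G v n)} ⊆ G.neighborSet b :=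
          fun x hx => hx.1.symm
        exact le_trans (Set.ncard_le_ncard hsub hnbf) (hdeg b)
    have hcount := ncard_le_mul_snd hEf hfib
    have hdisj : Disjoint (ball G v n) (Prod.snd '' ebd G (ball G v n)) := by
      rw [Set.disjoint_right]
      rintro b ⟨⟨x, y⟩, ⟨-, -, hy⟩, rfl⟩ hb
      exact hy hb
    have hcard : (ball G v n).ncard + (Prod.snd '' ebd G (ball G v n)).ncard
        ≤ (ball G v (n+1)).ncard := by
      rw [← Set.ncard_union_eq hdisj hBf (hEf.image _)]
      exact Set.ncard_le_ncard
        (Set.union_subset (ball_mono (Nat.le_succ n)) (image_ebd_subset hconn n)) (hfin (n+1))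
    have h1 : g * a n ^ (1 - 1/d₁) ≤ ((ebd G (ball G v n)).ncard : ℝ) := hiso _ hBf hBne
    have h2 : ((ebd G (ball G v n)).ncard : ℝ)
        ≤ (D : ℝ) * ((Prod.snd '' ebd G (ball G v n)).ncard : ℝ) := by
      exact_mod_cast hcount
    have h3 : a n + ((Prod.snd '' ebd G (ball G v n)).ncard : ℝ) ≤ a (n+1) := by
      show ((ball G v n).ncard : ℝ) + ((Prod.snd '' ebd G (ball G v n)).ncard : ℝ)
        ≤ ((ball G v (n+1)).ncard : ℝ)
      exact_mod_cast hcard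
    have h4 : c * a n ^ (1 - 1/d₁) ≤ ((Prod.snd '' ebd G (ball G v n)).ncard : ℝ) := by
      rw [hc_def, div_mul_eq_mul_div, div_le_iff₀ hD0]
      calc g * a n ^ (1 - 1/d₁)
          ≤ ((ebd G (ball G v n)).ncard : ℝ) := h1
        _ ≤ (D : ℝ) * ((Prod.snd '' ebd G (ball G v n)).ncard : ℝ) := h2
        _ = ((Prod.snd '' ebd G (ball G v n)).ncard : ℝ) * (D : ℝ) := by ring
    linarith
  have hd0 : (0:ℝ) < d₁ := lt_trans one_pos hd₁
  set ε : ℝ := (1 + c) ^ (1/d₁) - 1 with hε_def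
  have hε : 0 < ε := by
    have h2 : (1:ℝ) ^ (1/d₁) < (1 + c) ^ (1/d₁) :=
      Real.rpow_lt_rpow zero_le_one (by linarith) (by positivity)
    rw [Real.one_rpow] at h2
    rw [hε_def]; linarith
  have hmain : ∀ k : ℕ, (1 + ε * k) ^ d₁ ≤ a (nω + k) := by
    intro k
    induction k with
    | zero => simpa using ha1 nω
    | succ k ih =>
      have hA1 : 1 ≤ a (nω + k) := ha1 _
      have hA0 : (0:ℝ) < a (nω + k) := lt_of_lt_of_le one_pos hA1
      set t : ℝ := a (nω + k) ^ (1/d₁) with ht_def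
      have htd : t ^ d₁ = a (nω + k) := by
        rw [ht_def, ← Real.rpow_mul (le_of_lt hA0), one_div_mul_cancel hd0.ne',
          Real.rpow_one]
      have ht1 : 1 ≤ t := Real.one_le_rpow hA1 (by positivity)
      have ht0 : (0:ℝ) ≤ t := by linarith
      have hεk : (0:ℝ) ≤ 1 + ε * k := by positivity
      have htk : 1 + ε * k ≤ t := by
        rw [← Real.rpow_le_rpow_iff hεk ht0 hd0, htd]; exact ih
      have hexp : d₁ * (1 - 1/d₁) = d₁ - 1 := by field_simp
      have htpow : a (nω + k) ^ (1 - 1/d₁) = t ^ (d₁ - 1) := by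
        rw [← htd, ← Real.rpow_mul ht0, hexp]
      have hk : a (nω + k) + c * a (nω + k) ^ (1 - 1/d₁) ≤ a (nω + k + 1) := hstep _
      have hcast : (1:ℝ) + ε * ((k+1 : ℕ) : ℝ) = (1 + ε * k) + ε := by push_cast; ring
      calc (1 + ε * ((k+1:ℕ):ℝ)) ^ d₁ = ((1 + ε * k) + ε) ^ d₁ := by rw [hcast]
        _ ≤ (t + ε) ^ d₁ :=
            Real.rpow_le_rpow (by positivity) (by linarith) (le_of_lt hd0)
        _ ≤ t ^ d₁ + c * t ^ (d₁ - 1) := key_ineq hd₁ hc hε_def ht1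
        _ = a (nω + k) + c * a (nω + k) ^ (1 - 1/d₁) := by rw [htd, htpow]
        _ ≤ a (nω + (k+1)) := hk
  refine ⟨(ε / g) ^ d₁, Real.rpow_pos_of_pos (div_pos hε hg) _, ?_⟩
  intro n hn
  show (ε / g) ^ d₁ * g ^ d₁ * ((n : ℝ) - (nω : ℝ)) ^ d₁ ≤ a n
  set k := n - nω with hk_def
  have hnk : nω + k = n := by omega
  have hcast : ((n:ℝ) - (nω:ℝ)) = (k:ℝ) := (Nat.cast_sub hn).symm
  have h1 : (ε * k) ^ d₁ ≤ (1 + ε * k) ^ d₁ :=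
    Real.rpow_le_rpow (by positivity) (by linarith) (le_of_lt hd0)
  have h2 := hmain k
  rw [hnk] at h2
  have hfold : (ε / g) ^ d₁ * g ^ d₁ = ε ^ d₁ := by
    rw [← Real.mul_rpow (by positivity) hg.le, div_mul_cancel₀ _ hg.ne']
  have h3 : (ε / g) ^ d₁ * g ^ d₁ * ((n:ℝ) - (nω:ℝ)) ^ d₁ = (ε * k) ^ d₁ := by
    rw [hcast, hfold, ← Real.mul_rpow hε.le (Nat.cast_nonneg k)]
  rw [h3]
  exact le_trans h1 h2
end

section
/- Let G be a graph of bounded degree such that for all vertices v and integers n, |B(v,n)| ≤ b·n^{d₂} for constants b, d₂ > 0, and fix η ∈ (0,1). Then there exists A > 0 (depending only on b, d₂, η) such that for every vertex v and every positive integer n there exists an integer m with n^{1−η} ≤ m ≤ n and |B(v,2m)| ≤ A·|B(v,m)|. -/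
open Set Filter

open SepProfile Real

theorem stmt7 {V : Type*} (G : SimpleGraph V) (D : ℕ) (hdeg : DegLE G D)
    (b d₂ : ℝ) (hb : 0 < b) (hd₂ : 0 < d₂)
    (hball : ∀ (v : V) (n : ℕ), 1 ≤ n → (ball G v n).Finite ∧
      ((ball G v n).ncard : ℝ) ≤ b * (n : ℝ) ^ d₂)
    (η : ℝ) (hη : η ∈ Set.Ioo (0:ℝ) 1) :
    ∃ A > (0:ℝ), ∀ (v : V) (n : ℕ), 0 < n →
      ∃ m : ℕ, (n : ℝ) ^ (1 - η) ≤ (m : ℝ) ∧ m ≤ n ∧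
        ((ball G v (2*m)).ncard : ℝ) ≤ A * ((ball G v m).ncard : ℝ) := by
  obtain ⟨hη0, hη1⟩ := hη
  set t : ℕ := ⌈(d₂+1)/η⌉₊ with ht
  have ht0 : 0 < t := Nat.ceil_pos.2 (by positivity)
  have htd : d₂ + 1 ≤ η * t := by
    have h1 : (d₂+1)/η ≤ (t:ℝ) := Nat.le_ceil _
    calc d₂ + 1 = η * ((d₂+1)/η) := by field_simp
    _ ≤ η * t := by nlinarith
  set N₀ : ℕ := ⌈b * 4^t⌉₊ with hN₀
  have hbN : b * 4^t ≤ (N₀:ℝ) := Nat.le_ceil _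
  set A : ℝ := (2:ℝ)^t + b*((2*N₀:ℕ):ℝ)^d₂ + 1 with hA
  have hA1 : (1:ℝ) ≤ A := by
    have h1 : (0:ℝ) ≤ (2:ℝ)^t := by positivity
    have h2 : (0:ℝ) ≤ b*((2*N₀:ℕ):ℝ)^d₂ := by positivity
    linarith
  have hA0 : (0:ℝ) < A := lt_of_lt_of_le one_pos hA1
  refine ⟨A, hA0, ?_⟩
  intro v n hn
  have hn1R : (1:ℝ) ≤ (n:ℝ) := by exact_mod_cast hn
  have hmem : ∀ k : ℕ, v ∈ ball G v k := by
    intro k; exact ⟨SimpleGraph.Reachable.refl v, by rw [SimpleGraph.dist_self]; exact Nat.zero_le k⟩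
  have hpos : ∀ k : ℕ, 1 ≤ k → (1:ℝ) ≤ ((ball G v k).ncard : ℝ) := by
    intro k hk
    have hfin := (hball v k hk).1
    have : 0 < (ball G v k).ncard :=
      (Set.ncard_pos hfin).2 ⟨v, hmem k⟩
    exact_mod_cast this
  have hballmono : ∀ j k : ℕ, j ≤ k → ball G v j ⊆ ball G v k := by
    intro j k hjk u hu
    exact ⟨hu.1, le_trans hu.2 hjk⟩
  by_cases hsmall : n ≤ N₀
  · -- small case: take m = n
    refine ⟨n, ?_, le_refl n, ?_⟩
    · calc (n:ℝ)^(1-η) ≤ (n:ℝ)^(1:ℝ) :=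
            Real.rpow_le_rpow_of_exponent_le hn1R (by linarith)
        _ = n := Real.rpow_one _
    · have h2n : 1 ≤ 2*n := by omega
      have hub := (hball v (2*n) h2n).2
      have hle : ((2*n:ℕ):ℝ)^d₂ ≤ ((2*N₀:ℕ):ℝ)^d₂ := by
        apply Real.rpow_le_rpow (by positivity) _ hd₂.le
        exact_mod_cast Nat.mul_le_mul_left 2 hsmall
      have h3 : ((ball G v (2*n)).ncard : ℝ) ≤ A := by
        have : (0:ℝ) ≤ (2:ℝ)^t := by positivity
        have hb2 : b * ((2*n:ℕ):ℝ)^d₂ ≤ b * ((2*N₀:ℕ):ℝ)^d₂ := by nlinarith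
        push_cast at hub hb2 ⊢
        push_cast [hA]
        linarith
      calc ((ball G v (2*n)).ncard : ℝ) ≤ A := h3
        _ ≤ A * ((ball G v n).ncard : ℝ) :=
            le_mul_of_one_le_right hA0.le (hpos n hn)
  · -- large case: n > N₀, contradiction argument
    push_neg at hsmall
    by_contra hcon
    push_neg at hcon
    set m₀ : ℕ := ⌈(n:ℝ)^(1-η)⌉₊ with hm₀
    have hrpow1 : (1:ℝ) ≤ (n:ℝ)^(1-η) := by
      have := Real.rpow_le_rpow (by norm_num : (0:ℝ) ≤ 1) hn1R (by linarith : (0:ℝ) ≤ 1-η)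
      simpa using this
    have hm₀1 : 1 ≤ m₀ := Nat.ceil_pos.2 (by linarith)
    have hm₀n : m₀ ≤ n := by
      apply Nat.ceil_le.2
      calc (n:ℝ)^(1-η) ≤ (n:ℝ)^(1:ℝ) :=
            Real.rpow_le_rpow_of_exponent_le hn1R (by linarith)
        _ = n := Real.rpow_one _
    have hm₀le : (m₀:ℝ) ≤ 2 * (n:ℝ)^(1-η) := by
      have := Nat.ceil_lt_add_one (by positivity : (0:ℝ) ≤ (n:ℝ)^(1-η))
      have h2 : (m₀:ℝ) < (n:ℝ)^(1-η) + 1 := this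
      linarith
    have hceil : (n:ℝ)^(1-η) ≤ (m₀:ℝ) := Nat.le_ceil _
    -- key doubling induction
    have key : ∀ j : ℕ, 2^j * m₀ ≤ n →
        A^j * ((ball G v m₀).ncard : ℝ) ≤ ((ball G v (2^j*m₀)).ncard : ℝ) := by
      intro j
      induction j with
      | zero => intro _; simp
      | succ j ih =>
        intro hjn
        have hstep : 2^j * m₀ ≤ n := by
          have : 2^j * m₀ ≤ 2^(j+1) * m₀ :=
            Nat.mul_le_mul_right m₀ (Nat.pow_le_pow_right (by norm_num) (Nat.le_succ j))
          omega
        have hge : (n:ℝ)^(1-η) ≤ ((2^j*m₀ : ℕ):ℝ) := by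
          have : (m₀:ℝ) ≤ ((2^j*m₀ : ℕ):ℝ) := by
            exact_mod_cast Nat.le_mul_of_pos_left m₀ (Nat.two_pow_pos j)
          linarith
        have hlt := hcon (2^j*m₀) hge hstep
        have heq : 2*(2^j*m₀) = 2^(j+1)*m₀ := by ring
        rw [heq] at hlt
        have := ih hstep
        calc A^(j+1) * ((ball G v m₀).ncard : ℝ)
            = A * (A^j * ((ball G v m₀).ncard : ℝ)) := by ring
          _ ≤ A * ((ball G v (2^j*m₀)).ncard : ℝ) := by nlinarith
          _ ≤ ((ball G v (2^(j+1)*m₀)).ncard : ℝ) := hlt.le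
    set K : ℕ := Nat.log 2 (n / m₀) with hK
    have hm₀pos : 0 < m₀ := hm₀1
    have hdiv1 : 1 ≤ n / m₀ := (Nat.one_le_div_iff hm₀pos).2 hm₀n
    have h2Kle : 2^K * m₀ ≤ n := by
      have := Nat.pow_log_le_self 2 (Nat.one_le_iff_ne_zero.1 hdiv1)
      exact (Nat.le_div_iff_mul_le hm₀pos).1 this
    have h2Kgt : n < 2^(K+1) * m₀ := by
      have := Nat.lt_pow_succ_log_self (by norm_num : 1 < 2) (n / m₀)
      exact (Nat.div_lt_iff_lt_mul hm₀pos).1 this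
    -- real estimates
    have hnpowη : (0:ℝ) < (n:ℝ)^η := Real.rpow_pos_of_pos (by linarith) η
    have hnpow1η : (0:ℝ) < (n:ℝ)^(1-η) := Real.rpow_pos_of_pos (by linarith) (1-η)
    have hsplit : (n:ℝ) = (n:ℝ)^η * (n:ℝ)^(1-η) := by
      rw [← Real.rpow_add (by linarith : (0:ℝ) < (n:ℝ))]
      norm_num
    have h2K : (n:ℝ)^η / 4 < (2:ℝ)^K := by
      have hcast : (n:ℝ) < (2:ℝ)^(K+1) * (m₀:ℝ) := by exact_mod_cast h2Kgt
      have h4 : (n:ℝ) < 4 * (2:ℝ)^K * (n:ℝ)^(1-η) := by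
        have h2p : (0:ℝ) < (2:ℝ)^(K+1) := by positivity
        calc (n:ℝ) < (2:ℝ)^(K+1) * (m₀:ℝ) := hcast
          _ ≤ (2:ℝ)^(K+1) * (2 * (n:ℝ)^(1-η)) := by nlinarith
          _ = 4 * (2:ℝ)^K * (n:ℝ)^(1-η) := by ring
      rw [div_lt_iff₀ (by norm_num : (0:ℝ) < 4)]
      have : (n:ℝ)^η * (n:ℝ)^(1-η) < 4 * (2:ℝ)^K * (n:ℝ)^(1-η) := by
        rw [← hsplit]; exact h4
      have := (mul_lt_mul_iff_left₀ hnpow1η).1 this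
      linarith
    have hpowt : ((n:ℝ)^η / 4)^t < ((2:ℝ)^K)^t :=
      pow_lt_pow_left₀ h2K (by positivity) (Nat.pos_iff_ne_zero.1 ht0)
    have hlhs : b * (n:ℝ)^d₂ ≤ ((n:ℝ)^η / 4)^t := by
      have hnN : b * 4^t ≤ (n:ℝ) := by
        have : (N₀:ℝ) ≤ (n:ℝ) := by exact_mod_cast hsmall.le
        linarith
      have h1 : ((n:ℝ)^η)^t = (n:ℝ)^(η * t) := by
        rw [← Real.rpow_natCast ((n:ℝ)^η) t, ← Real.rpow_mul (by linarith)]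
      have h2 : (n:ℝ)^(d₂+1) ≤ (n:ℝ)^(η * t) :=
        Real.rpow_le_rpow_of_exponent_le hn1R htd
      have h3 : (n:ℝ)^(d₂+1) = (n:ℝ)^d₂ * (n:ℝ) := by
        rw [Real.rpow_add (by linarith : (0:ℝ) < (n:ℝ)), Real.rpow_one]
      have h4t : (0:ℝ) < (4:ℝ)^t := by positivity
      have hd2pos : (0:ℝ) < (n:ℝ)^d₂ := Real.rpow_pos_of_pos (by linarith) d₂
      rw [div_pow, h1, le_div_iff₀ h4t]
      calc b * (n:ℝ)^d₂ * 4^t = (n:ℝ)^d₂ * (b * 4^t) := by ring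
        _ ≤ (n:ℝ)^d₂ * (n:ℝ) := mul_le_mul_of_nonneg_left hnN hd2pos.le
        _ = (n:ℝ)^(d₂+1) := h3.symm
        _ ≤ (n:ℝ)^(η*t) := h2
    have hAK : ((2:ℝ)^K)^t ≤ A^K := by
      have : ((2:ℝ)^K)^t = ((2:ℝ)^t)^K := by
        rw [← pow_mul, ← pow_mul, Nat.mul_comm]
      rw [this]
      apply pow_le_pow_left₀ (by positivity)
      have h2 : (0:ℝ) ≤ b*((2*N₀:ℕ):ℝ)^d₂ := by positivity
      rw [hA]; linarith
    have hKn := key K h2Kle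
    have hKbig : (1:ℝ) ≤ 2^K*m₀ := by
      have : 1 ≤ 2^K*m₀ := Nat.one_le_iff_ne_zero.2 (by positivity)
      exact_mod_cast this
    have h2Km : 1 ≤ 2^K*m₀ := by
      exact Nat.one_le_iff_ne_zero.2 (by positivity)
    have hchain : ((ball G v (2^K*m₀)).ncard : ℝ) ≤ b * (n:ℝ)^d₂ := by
      have hsub := hballmono (2^K*m₀) n h2Kle
      have hle : ((ball G v (2^K*m₀)).ncard : ℝ) ≤ ((ball G v n).ncard : ℝ) := by
        exact_mod_cast Set.ncard_le_ncard hsub (hball v n hn).1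
      exact le_trans hle (hball v n hn).2
    have hB₀ : (1:ℝ) ≤ ((ball G v m₀).ncard : ℝ) := hpos m₀ hm₀1
    have hAKpos : (0:ℝ) ≤ A^K := by positivity
    have : b * (n:ℝ)^d₂ < b * (n:ℝ)^d₂ := by
      calc b * (n:ℝ)^d₂ ≤ ((n:ℝ)^η / 4)^t := hlhs
        _ < ((2:ℝ)^K)^t := hpowt
        _ ≤ A^K := hAK
        _ ≤ A^K * ((ball G v m₀).ncard : ℝ) := le_mul_of_one_le_right hAKpos hB₀
        _ ≤ ((ball G v (2^K*m₀)).ncard : ℝ) := hKn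
        _ ≤ b * (n:ℝ)^d₂ := hchain
    exact lt_irrefl _ this
end
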